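/- arXiv:2601.02948 — 2 statements merged into one kernel-verified Lean document; each statement's English description precedes it below -/
import Mathlib

section
/- Let Z, Z^(1), …, Z^(k) be k+1 independent and identically distributed real-valued random variables on a probability space, and let 1 ≤ r ≤ k be an integer. Let Z^((r)) denote the r-th order statistic (r-th smallest value) of Z^(1), …, Z^(k). Then Pr[Z ≤ Z^((r))] ≥ r/(k+1). -/
open MeasureTheory ProbabilityTheory

section Aux

open Finset

lemma card_filter_val_lt' {n m : ℕ} (hm : m ≤ n) :
    (Finset.univ.filter fun q : Fin n => (q : ℕ) < m).card = m := by
  classical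
  have : (Finset.univ.filter fun q : Fin n => (q : ℕ) < m)
      = Finset.image (Fin.castLE hm) Finset.univ := by
    ext q
    simp only [mem_filter, mem_univ, true_and, mem_image]
    constructor
    · intro hq; exact ⟨⟨q, hq⟩, rfl⟩
    · rintro ⟨p, rfl⟩; exact p.2
  rw [this, Finset.card_image_of_injective _ (Fin.castLE_injective hm), Finset.card_univ,
    Fintype.card_fin]

/-- At least `r` indices `j` have fewer than `r` strictly smaller values. -/
lemma rank_lemma' {n r : ℕ} (hr : r ≤ n) (w : Fin n → ℝ) :
    r ≤ (Finset.univ.filter fun j =>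
        (Finset.univ.filter fun i => w i < w j).card < r).card := by
  classical
  set σ := Tuple.sort w with hσ
  have hmono := Tuple.monotone_sort w
  have key : ∀ p : Fin n, (p : ℕ) < r →
      (Finset.univ.filter fun i => w i < w (σ p)).card < r := by
    intro p hp
    have hsub : (Finset.univ.filter fun i => w i < w (σ p))
        ⊆ Finset.image σ (Finset.univ.filter fun q : Fin n => (q : ℕ) < (p : ℕ)) := by
      intro i hi
      simp only [mem_filter, mem_univ, true_and] at hi
      have : σ.symm i < p := by
        by_contra h
        push_neg at h
        have := hmono h
        simp only [Function.comp_apply, Equiv.apply_symm_apply] at this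
        exact absurd hi (not_lt.mpr (by simpa [hσ] using this))
      exact Finset.mem_image.mpr ⟨σ.symm i, by
        simp only [mem_filter, mem_univ, true_and]; exact this, by simp⟩
    calc (Finset.univ.filter fun i => w i < w (σ p)).card
        ≤ (Finset.image σ (Finset.univ.filter fun q : Fin n => (q : ℕ) < (p : ℕ))).card :=
          Finset.card_le_card hsub
      _ ≤ (Finset.univ.filter fun q : Fin n => (q : ℕ) < (p : ℕ)).card :=
          Finset.card_image_le
      _ = (p : ℕ) := card_filter_val_lt' (le_of_lt p.2)
      _ < r := hp
  have hsub2 : Finset.image σ (Finset.univ.filter fun p : Fin n => (p : ℕ) < r)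
      ⊆ Finset.univ.filter fun j => (Finset.univ.filter fun i => w i < w j).card < r := by
    intro j hj
    rcases Finset.mem_image.mp hj with ⟨p, hp, rfl⟩
    simp only [mem_filter, mem_univ, true_and] at hp ⊢
    exact key p hp
  calc r = (Finset.univ.filter fun p : Fin n => (p : ℕ) < r).card :=
        (card_filter_val_lt' hr).symm
    _ = (Finset.image σ (Finset.univ.filter fun p : Fin n => (p : ℕ) < r)).card :=
        (Finset.card_image_of_injective _ σ.injective).symm
    _ ≤ _ := Finset.card_le_card hsub2

end Aux

/-- The `r`-th smallest value (1-indexed) among the `k` values `v 0, …, v (k-1)`. -/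
noncomputable def orderStat {k : ℕ} (r : ℕ) (v : Fin k → ℝ) : ℝ :=
  ((List.ofFn v).insertionSort (· ≤ ·)).getD (r - 1) 0

section Aux2

open Finset

lemma countP_ofFn' {k : ℕ} (v : Fin k → ℝ) (p : ℝ → Bool) :
    (List.ofFn v).countP p = (Finset.univ.filter fun i => p (v i)).card := by
  induction k with
  | zero => simp
  | succ k ih =>
    rw [List.ofFn_succ, List.countP_cons, ih (fun i => v i.succ),
      Finset.card_filter, Finset.card_filter, Fin.sum_univ_succ]
    by_cases h : p (v 0) <;> simp [h, add_comm]

lemma le_orderStat' {k r : ℕ} (hr1 : 1 ≤ r) (hrk : r ≤ k) (v : Fin k → ℝ) (z : ℝ)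
    (h : (Finset.univ.filter fun i => v i < z).card < r) : z ≤ orderStat r v := by
  classical
  by_contra hlt
  push_neg at hlt
  set l := (List.ofFn v).insertionSort (· ≤ ·) with hl
  have hlen : l.length = k := by
    rw [hl, List.length_insertionSort, List.length_ofFn]
  have hr1' : r - 1 < l.length := by omega
  have hsorted : l.Pairwise (· ≤ ·) := List.pairwise_insertionSort _ _
  have hget : orderStat r v = l.get ⟨r - 1, hr1'⟩ := by
    rw [orderStat, ← hl, List.getD_eq_getElem _ _ hr1']
    rfl
  have hcount : r ≤ l.countP (fun x => decide (x < z)) := by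
    have htake : (l.take r).countP (fun x => decide (x < z)) = (l.take r).length := by
      rw [List.countP_eq_length]
      intro a ha
      rcases List.mem_take_iff_getElem.mp ha with ⟨i, hi, rfl⟩
      have hil : i < l.length := lt_of_lt_of_le (lt_min_iff.mp hi).1 (by omega)
      have hle : l[i] ≤ l.get ⟨r - 1, hr1'⟩ := by
        rcases eq_or_lt_of_le (Nat.le_sub_one_of_lt (lt_min_iff.mp hi).1) with h' | h'
        · have : i = r - 1 := h'
          simp [List.get, this]
        · exact List.pairwise_iff_get.mp hsorted ⟨i, hil⟩ ⟨r - 1, hr1'⟩ h'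
      simpa using lt_of_le_of_lt hle (by rw [← hget]; exact hlt)
    have : (l.take r).length = r := by simp [hlen]; omega
    calc r = (l.take r).countP (fun x => decide (x < z)) := by rw [htake, this]
      _ ≤ l.countP (fun x => decide (x < z)) := (List.take_sublist r l).countP_le
  have hperm : l.countP (fun x => decide (x < z))
      = (List.ofFn v).countP (fun x => decide (x < z)) :=
    (List.perm_insertionSort _ _).countP_eq _
  rw [hperm, countP_ofFn'] at hcount
  simp only [decide_eq_true_eq] at hcount
  omega

end Aux2

open Finset in
/-- Let `Z, Z⁽¹⁾, …, Z⁽ᵏ⁾` be `k+1` i.i.d. real random variables and `1 ≤ r ≤ k`.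
Then `Pr[Z ≤ Z⁽⁽ʳ⁾⁾] ≥ r / (k+1)`, where `Z⁽⁽ʳ⁾⁾` is the `r`-th order statistic
of `Z⁽¹⁾, …, Z⁽ᵏ⁾`. -/
theorem prob_le_orderStat_ge
    {Ω : Type*} [MeasurableSpace Ω] (μ : Measure Ω) [IsProbabilityMeasure μ]
    (k : ℕ) (Z : Ω → ℝ) (Zc : Fin k → Ω → ℝ)
    (W : Fin (k + 1) → Ω → ℝ) (hW : W = Fin.cons Z Zc)
    (hmeas : ∀ i, Measurable (W i))
    (hindep : iIndepFun W μ)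
    (hident : ∀ i j : Fin (k + 1), IdentDistrib (W i) (W j) μ μ)
    (r : ℕ) (hr1 : 1 ≤ r) (hrk : r ≤ k) :
    ENNReal.ofReal ((r : ℝ) / ((k : ℝ) + 1)) ≤
      μ {ω | Z ω ≤ orderStat r (fun i => Zc i ω)} := by
  classical
  set T : Ω → (Fin (k+1) → ℝ) := fun ω i => W i ω with hT
  have hTmeas : Measurable T := measurable_pi_lambda _ hmeas
  set ν : Measure ℝ := μ.map (W 0) with hν
  have hνprob : IsProbabilityMeasure ν := Measure.isProbabilityMeasure_map (hmeas 0).aemeasurable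
  have hmapWi : ∀ i, μ.map (W i) = ν := fun i => (hident i 0).map_eq
  have hpi : Measure.pi (fun _ : Fin (k+1) => ν) = μ.map T := by
    refine Measure.pi_eq fun s hs => ?_
    rw [Measure.map_apply hTmeas (MeasurableSet.univ_pi hs)]
    have hpre : T ⁻¹' Set.pi Set.univ s = ⋂ i ∈ Finset.univ, W i ⁻¹' s i := by
      ext ω; simp [Set.mem_pi, hT]
    rw [hpre, hindep.measure_inter_preimage_eq_mul Finset.univ (fun i _ => hs i)]
    refine Finset.prod_congr rfl fun i _ => ?_
    rw [← hmapWi i, Measure.map_apply (hmeas i) (hs i)]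
  set N : (Fin (k+1) → ℝ) → Fin (k+1) → ℕ :=
    fun w j => (Finset.univ.filter fun i => w i < w j).card with hN
  have hNmeas : ∀ j, Measurable fun w => N w j := by
    intro j
    have : (fun w => N w j) = fun w => ∑ i : Fin (k+1), if w i < w j then 1 else 0 := by
      funext w; rw [hN]; exact Finset.card_filter _ _
    rw [this]
    exact Finset.measurable_sum _ fun i _ =>
      Measurable.ite (measurableSet_lt (measurable_pi_apply i) (measurable_pi_apply j))
        measurable_const measurable_const
  set B : Fin (k+1) → Set (Fin (k+1) → ℝ) := fun j => {w | N w j < r} with hB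
  have hBmeas : ∀ j, MeasurableSet (B j) := fun j =>
    (hNmeas j) (measurableSet_lt measurable_id measurable_const)
  have hBeq : ∀ j, Measure.pi (fun _ : Fin (k+1) => ν) (B j)
      = Measure.pi (fun _ : Fin (k+1) => ν) (B 0) := by
    intro j
    set f : Fin (k+1) ≃ Fin (k+1) := Equiv.swap 0 j with hf
    have hmp : MeasurePreserving (MeasurableEquiv.piCongrLeft (fun _ : Fin (k+1) => ℝ) f)
        (Measure.pi fun _ => ν) (Measure.pi fun _ => ν) :=
      MeasureTheory.measurePreserving_piCongrLeft (fun _ => ν) f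
    have happ : ∀ w : Fin (k+1) → ℝ,
        (MeasurableEquiv.piCongrLeft (fun _ : Fin (k+1) => ℝ) f) w = w ∘ f.symm := by
      intro w; funext i
      have := MeasurableEquiv.piCongrLeft_apply_apply (β := fun _ : Fin (k+1) => ℝ) f w (f.symm i)
      simpa using this
    have hf0 : f.symm 0 = j := by
      simp only [hf, Equiv.symm_swap, Equiv.swap_apply_left]
    have hpre : (MeasurableEquiv.piCongrLeft (fun _ : Fin (k+1) => ℝ) f) ⁻¹' (B 0) = B j := by
      ext w
      simp only [Set.mem_preimage, hB, Set.mem_setOf_eq, happ]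
      have hNcomp : N (w ∘ f.symm) 0 = N w j := by
        show (Finset.univ.filter fun i => (w ∘ f.symm) i < (w ∘ f.symm) 0).card
          = (Finset.univ.filter fun i => w i < w j).card
        have heq : (Finset.univ.filter fun i => (w ∘ f.symm) i < (w ∘ f.symm) 0)
            = Finset.image f (Finset.univ.filter fun i => w i < w j) := by
          ext i
          simp only [mem_filter, mem_univ, true_and, mem_image, Function.comp_apply]
          constructor
          · intro hi
            exact ⟨f.symm i, by rwa [hf0] at hi, by simp⟩
          · rintro ⟨q, hq, rfl⟩
            simpa [hf0] using hq
        rw [heq, Finset.card_image_of_injective _ f.injective]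
      rw [hNcomp]
    rw [← hpre, ← hmp.measure_preimage (hBmeas 0).nullMeasurableSet]
  set A : Fin (k+1) → Set Ω := fun j => T ⁻¹' B j with hA
  have hAmeas : ∀ j, MeasurableSet (A j) := fun j => hTmeas (hBmeas j)
  have hAeq : ∀ j, μ (A j) = μ (A 0) := by
    intro j
    rw [hA]
    simp only
    rw [← Measure.map_apply hTmeas (hBmeas j), ← Measure.map_apply hTmeas (hBmeas 0), ← hpi]
    exact hBeq j
  have hpoint : ∀ ω, (r : ENNReal) ≤ ∑ j, (A j).indicator (fun _ => (1 : ENNReal)) ω := by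
    intro ω
    have hrank := rank_lemma' (n := k + 1) (r := r) (by omega) (T ω)
    have hsum : ∑ j, (A j).indicator (fun _ => (1 : ENNReal)) ω
        = ((Finset.univ.filter fun j =>
            (Finset.univ.filter fun i => T ω i < T ω j).card < r).card : ENNReal) := by
      rw [Finset.card_filter]
      push_cast
      refine Finset.sum_congr rfl fun j _ => ?_
      by_cases hj : ω ∈ A j
      · have : (Finset.univ.filter fun i => T ω i < T ω j).card < r := hj
        simp [hj, this]
      · have : ¬ (Finset.univ.filter fun i => T ω i < T ω j).card < r := hj
        simp [hj, this]
    rw [hsum]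
    exact_mod_cast hrank
  have hsum : (r : ENNReal) ≤ ∑ j, μ (A j) := by
    calc (r : ENNReal) = ∫⁻ _, (r : ENNReal) ∂μ := by simp
      _ ≤ ∫⁻ ω, ∑ j, (A j).indicator (fun _ => (1 : ENNReal)) ω ∂μ := lintegral_mono hpoint
      _ = ∑ j, ∫⁻ ω, (A j).indicator (fun _ => (1 : ENNReal)) ω ∂μ :=
          lintegral_finset_sum _ (fun j _ => measurable_one.indicator (hAmeas j))
      _ = ∑ j, μ (A j) := by
          refine Finset.sum_congr rfl fun j _ => ?_
          exact lintegral_indicator_one (hAmeas j)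
  have hsum0 : (r : ENNReal) ≤ ((k : ENNReal) + 1) * μ (A 0) := by
    calc (r : ENNReal) ≤ ∑ j, μ (A j) := hsum
      _ = ∑ _j : Fin (k+1), μ (A 0) := Finset.sum_congr rfl fun j _ => hAeq j
      _ = ((k : ENNReal) + 1) * μ (A 0) := by
          rw [Finset.sum_const, Finset.card_univ, Fintype.card_fin, nsmul_eq_mul]
          push_cast
          ring
  have hdiv : (r : ENNReal) / ((k : ENNReal) + 1) ≤ μ (A 0) := by
    refine ENNReal.div_le_of_le_mul ?_
    rwa [mul_comm] at hsum0
  have hsubset : A 0 ⊆ {ω | Z ω ≤ orderStat r (fun i => Zc i ω)} := by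
    intro ω hω
    have hω' : N (T ω) 0 < r := hω
    have hNval : N (T ω) 0 = (Finset.univ.filter fun i : Fin k => Zc i ω < Z ω).card := by
      show (Finset.univ.filter fun i : Fin (k+1) => W i ω < W 0 ω).card = _
      rw [Finset.card_filter, Finset.card_filter, Fin.sum_univ_succ]
      have h0 : ¬ (W 0 ω < W 0 ω) := lt_irrefl _
      simp only [h0, if_false, zero_add]
      refine Finset.sum_congr rfl fun i _ => ?_
      rw [hW]
      simp [Fin.cons_succ, Fin.cons_zero]
    rw [hNval] at hω'
    exact le_orderStat' hr1 hrk _ _ hω'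
  have hfinal : ENNReal.ofReal ((r : ℝ) / ((k : ℝ) + 1))
      = (r : ENNReal) / ((k : ENNReal) + 1) := by
    rw [ENNReal.ofReal_div_of_pos (by positivity)]
    congr 1
    · exact ENNReal.ofReal_natCast r
    · rw [show ((k : ℝ) + 1) = ((k + 1 : ℕ) : ℝ) by push_cast; ring,
        ENNReal.ofReal_natCast]
      push_cast
      ring
  rw [hfinal]
  exact le_trans hdiv (measure_mono hsubset)
end

section
/- Let k ≥ 1 and let y_0, y_1, …, y_k be real numbers. Fix an integer 1 ≤ r ≤ k, and for each index i ∈ {0, …, k} let q_i denote the r-th smallest value among the k numbers {y_j : j ≠ i}. Then the number of indices i with y_i > q_i is at most k + 1 − r. -/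
/-- The `r`-th smallest value (1-indexed) of a list of reals, counted with
multiplicity. -/
noncomputable def rthSmallest (r : ℕ) (l : List ℝ) : ℝ :=
  (l.insertionSort (· ≤ ·)).getD (r - 1) 0

lemma countP_ofFn_eq_card {p : ℝ → Prop} [DecidablePred p] (n : ℕ) (y : Fin n → ℝ) :
    (List.ofFn y).countP (fun x => decide (p x)) = (Finset.univ.filter fun i => p (y i)).card := by
  induction n with
  | zero => simp
  | succ n ih =>
    rw [List.ofFn_succ, List.countP_cons, Fin.card_filter_univ_succ, ih]
    by_cases h : p (y 0) <;> simp [h, add_comm]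

lemma count_lt_of_rth_lt (r : ℕ) (l : List ℝ) (t : ℝ) (hr1 : 1 ≤ r) (hrl : r ≤ l.length)
    (h : rthSmallest r l < t) : r ≤ l.countP (fun x => decide (x < t)) := by
  set s := l.insertionSort (· ≤ ·) with hs
  have hperm : List.Perm s l := l.perm_insertionSort (· ≤ ·)
  have hlen : s.length = l.length := hperm.length_eq
  have hsorted : s.Pairwise (· ≤ ·) := l.pairwise_insertionSort (· ≤ ·)
  have hlt : r - 1 < s.length := by omega
  have hget : rthSmallest r l = s.get ⟨r - 1, hlt⟩ := by
    rw [rthSmallest, List.getD_eq_getElem?_getD, List.getElem?_eq_getElem hlt]; rfl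
  rw [← hperm.countP_eq]
  have : r ≤ (s.take r).countP (fun x => decide (x < t)) := by
    have hlt' : (s.take r).length = r := by simp; omega
    rw [List.countP_eq_length_filter]
    have : (s.take r).filter (fun x => decide (x < t)) = s.take r := by
      rw [List.filter_eq_self]
      intro a ha
      obtain ⟨m, hma⟩ := List.get_of_mem (by exact ha)
      have hm' : (m : ℕ) < r := by have := m.2; omega
      have : s.get ⟨m, by omega⟩ ≤ s.get ⟨r - 1, hlt⟩ := by
        rcases eq_or_lt_of_le (by omega : (m : ℕ) ≤ r - 1) with h' | h'
        · exact le_of_eq (by congr 1; exact Fin.ext h')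
        · exact List.pairwise_iff_get.1 hsorted _ _ h'
      have hval : a = s.get ⟨m, by omega⟩ := by
        rw [← hma]
        simp [List.getElem_take]
      simp only [decide_eq_true_eq]
      calc a = s.get ⟨m, by omega⟩ := hval
        _ ≤ s.get ⟨r-1, hlt⟩ := this
        _ < t := hget ▸ h
    rw [this, hlt']
  calc r ≤ _ := this
    _ ≤ s.countP _ := by
        rw [List.countP_eq_length_filter, List.countP_eq_length_filter]
        exact List.Sublist.length_le (List.Sublist.filter _ (List.take_sublist r s))

/-- Let `k ≥ 1`, `y₀, …, y_k` be reals, and `1 ≤ r ≤ k`.  For each `i`, let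
`q i` be the `r`-th smallest value among the `k` numbers `{y j : j ≠ i}`.
Then the number of indices `i` with `y i > q i` is at most `k + 1 - r`. -/
theorem card_exceeding_leaveOneOut_quantile_le
    (k : ℕ) (hk : 1 ≤ k) (y : Fin (k + 1) → ℝ)
    (r : ℕ) (hr1 : 1 ≤ r) (hrk : r ≤ k)
    (q : Fin (k + 1) → ℝ)
    (hq : ∀ i : Fin (k + 1), q i = rthSmallest r ((List.ofFn y).eraseIdx i)) :
    (Finset.univ.filter fun i : Fin (k + 1) => q i < y i).card ≤ k + 1 - r := by
  set A := Finset.univ.filter fun i : Fin (k + 1) => q i < y i with hA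
  rcases A.eq_empty_or_nonempty with hAe | hAne
  · simp [hAe]
  obtain ⟨i, hiA, hmin⟩ := A.exists_min_image y hAne
  -- key: at least r indices j with y j < y i
  have hkey : r ≤ (Finset.univ.filter fun j : Fin (k + 1) => y j < y i).card := by
    have hi : q i < y i := (Finset.mem_filter.1 hiA).2
    have hlen : ((List.ofFn y).eraseIdx i).length = k := by
      rw [List.length_eraseIdx] <;> simp [i.2]
    have := count_lt_of_rth_lt r ((List.ofFn y).eraseIdx i) (y i) hr1 (by omega) (hq i ▸ hi)
    have hle : ((List.ofFn y).eraseIdx i).countP (fun x => decide (x < y i))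
        ≤ (List.ofFn y).countP (fun x => decide (x < y i)) :=
      List.Sublist.countP_le (List.eraseIdx_sublist _ _)
    have heq := countP_ofFn_eq_card (p := fun x => x < y i) (k + 1) y
    omega
  set B := Finset.univ.filter fun j : Fin (k + 1) => y j < y i with hB
  have hdisj : Disjoint A B := by
    rw [Finset.disjoint_left]
    intro j hjA hjB
    exact absurd (hmin j hjA) (not_le.2 (Finset.mem_filter.1 hjB).2)
  have hcard : A.card + B.card ≤ k + 1 := by
    rw [← Finset.card_union_of_disjoint hdisj]
    calc (A ∪ B).card ≤ (Finset.univ : Finset (Fin (k + 1))).card := Finset.card_le_card (Finset.subset_univ _)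
      _ = k + 1 := by simp
  omega
end
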